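/- Let λ = λ_j(w) for some w ∈ ℕ₀ and 0 ≤ j ≤ ℓ, and let V(λ) denote the complex vector space of ℂ^{ℓ+1}-valued polynomial functions F with u(1−u)F''(u) + (C − uU)F'(u) − (V + λ)F(u) = 0 for all u. Then dim{P ∈ V(λ) : deg P ≤ w} equals the cardinality of the set {w' : 0 ≤ w' ≤ w and λ = λ_{j'}(w') for some 0 ≤ j' ≤ ℓ}. In particular dim V(λ) equals the cardinality of the set {(w',j') : w' ∈ ℕ₀, 0 ≤ j' ≤ ℓ, λ = λ_{j'}(w')}. -/

import Mathlib

open Polynomial Matrix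

noncomputable section

/-- The matrix `C`. -/
def Cmat (β : ℝ) (ℓ : ℕ) : Matrix (Fin (ℓ+1)) (Fin (ℓ+1)) ℂ :=
  Matrix.of fun i j =>
    (if (i : ℕ) = (j : ℕ) then (β : ℂ) + 1 + 2 * (i : ℕ) else 0)
      + (if (i : ℕ) = (j : ℕ) + 1 then ((i : ℕ) : ℂ) else 0)

/-- The matrix `U`. -/
def Umat (α β : ℝ) (ℓ : ℕ) : Matrix (Fin (ℓ+1)) (Fin (ℓ+1)) ℂ :=
  Matrix.of fun i j =>
    if (i : ℕ) = (j : ℕ) then (α : ℂ) + β + ℓ + (i : ℕ) + 2 else 0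

/-- The matrix `V`. -/
def Vmat (α β k : ℝ) (ℓ : ℕ) : Matrix (Fin (ℓ+1)) (Fin (ℓ+1)) ℂ :=
  Matrix.of fun i j =>
    (if (i : ℕ) = (j : ℕ) then ((i : ℕ) : ℂ) * ((α : ℂ) + β + (i : ℕ) - k + 1) else 0)
      - (if (j : ℕ) = (i : ℕ) + 1 then ((ℓ : ℂ) - (i : ℕ)) * ((i : ℕ) + (β : ℂ) - k + 1) else 0)

/-- The eigenvalue `λ_j(w) = −w(w+α+β+ℓ+j+1) − j(α+β−k+1+j)`. -/
def lamEig (α β k : ℝ) (ℓ : ℕ) (w j : ℕ) : ℝ :=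
  -((w : ℝ) * ((w : ℝ) + α + β + ℓ + j + 1)) - (j : ℝ) * (α + β - k + 1 + (j : ℝ))

/-- Componentwise derivative of a vector of polynomials. -/
def vderiv (d : ℕ) : (Fin d → Polynomial ℂ) →ₗ[ℂ] (Fin d → Polynomial ℂ) :=
  LinearMap.pi fun i => (Polynomial.derivative (R := ℂ)).comp (LinearMap.proj i)

/-- The hypergeometric operator `D` acting on `ℂ^{ℓ+1}`-valued polynomials:
`(DF)(u) = u(1−u)F''(u) + (C−uU)F'(u) − V F(u)`. -/
def DlinV (α β k : ℝ) (ℓ : ℕ) :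
    (Fin (ℓ+1) → Polynomial ℂ) →ₗ[ℂ] (Fin (ℓ+1) → Polynomial ℂ) :=
  (((Matrix.scalar (Fin (ℓ+1)) (Polynomial.X * (1 - Polynomial.X))).mulVecLin).restrictScalars ℂ)
      ∘ₗ vderiv (ℓ+1) ∘ₗ vderiv (ℓ+1)
    + ((((Cmat β ℓ).map Polynomial.C
          - Matrix.scalar (Fin (ℓ+1)) Polynomial.X
              * (Umat α β ℓ).map Polynomial.C).mulVecLin).restrictScalars ℂ)
        ∘ₗ vderiv (ℓ+1)
    - (((Vmat α β k ℓ).map Polynomial.C).mulVecLin).restrictScalars ℂ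


/-- The space `V(λ)` of `ℂ^{ℓ+1}`-valued polynomial solutions of
`u(1−u)F'' + (C−uU)F' − (V+λ)F = 0`. -/
def Vlam (α β k : ℝ) (ℓ : ℕ) (lam : ℂ) :
    Submodule ℂ (Fin (ℓ+1) → Polynomial ℂ) :=
  LinearMap.ker (DlinV α β k ℓ - lam • LinearMap.id)

open Module LinearMap

def Bmm (β : ℝ) (ℓ : ℕ) (m : ℕ) : Matrix (Fin (ℓ+1)) (Fin (ℓ+1)) ℂ :=
  ((m:ℂ)+1) • ((m:ℂ) • (1 : Matrix (Fin (ℓ+1)) (Fin (ℓ+1)) ℂ) + Cmat β ℓ)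

def Mmm (α β k : ℝ) (ℓ : ℕ) (m : ℕ) : Matrix (Fin (ℓ+1)) (Fin (ℓ+1)) ℂ :=
  -(((m:ℂ)*((m:ℂ)-1)) • (1 : Matrix (Fin (ℓ+1)) (Fin (ℓ+1)) ℂ)
      + (m:ℂ) • Umat α β ℓ + Vmat α β k ℓ)

lemma coeff_X1X (p : Polynomial ℂ) (m : ℕ) :
    ((X*(1-X)) * (derivative (derivative p))).coeff m
      = ((m:ℂ)+1)*(m:ℂ) * p.coeff (m+1) - (m:ℂ)*((m:ℂ)-1) * p.coeff m := by
  set q := derivative (derivative p) with hq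
  have hql : ∀ t : ℕ, q.coeff t = p.coeff (t+2) * (((t:ℂ)+2) * ((t:ℂ)+1)) := by
    intro t
    rw [hq, coeff_derivative, coeff_derivative]
    push_cast; ring
  have hexp : (X*(1-X)) * q = X*q - X*(X*q) := by ring
  rw [hexp]
  match m with
  | 0 => simp [coeff_sub, mul_coeff_zero]
  | 1 =>
      rw [coeff_sub, coeff_X_mul, coeff_X_mul, mul_coeff_zero, coeff_X_zero, hql]
      push_cast; ring
  | (t+2) =>
      rw [coeff_sub, coeff_X_mul, coeff_X_mul, coeff_X_mul, hql, hql]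
      push_cast; ring

lemma coeff_mapC_mulVec {d : ℕ} (M : Matrix (Fin d) (Fin d) ℂ) (G : Fin d → Polynomial ℂ) (m : ℕ) (i : Fin d) :
    (((M.map Polynomial.C).mulVec G) i).coeff m = M.mulVec (fun j => (G j).coeff m) i := by
  simp [Matrix.mulVec, dotProduct, finset_sum_coeff, Matrix.map_apply, coeff_C_mul]

lemma coeff_scalarX_mapC_mulVec {d : ℕ} (M : Matrix (Fin d) (Fin d) ℂ) (G : Fin d → Polynomial ℂ) (m : ℕ) (i : Fin d) :
    (((Matrix.scalar (Fin d) (X : Polynomial ℂ) * M.map Polynomial.C).mulVec G) i).coeff m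
      = if m = 0 then 0 else M.mulVec (fun j => (G j).coeff (m-1)) i := by
  have h : ∀ j, (Matrix.scalar (Fin d) (X : Polynomial ℂ) * M.map Polynomial.C) i j
      = X * Polynomial.C (M i j) := by
    intro j
    simp [Matrix.scalar, Matrix.diagonal_mul, Matrix.map_apply]
  simp only [Matrix.mulVec, dotProduct, finset_sum_coeff, h]
  match m with
  | 0 => simp
  | (t+1) =>
      simp only [Matrix.mulVec, dotProduct, Nat.add_sub_cancel, if_neg (Nat.succ_ne_zero t)]
      refine Finset.sum_congr rfl fun x _ => ?_
      rw [mul_assoc, coeff_X_mul, coeff_C_mul]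

lemma vderiv_apply {d : ℕ} (G : Fin d → Polynomial ℂ) : vderiv d G = fun i => derivative (G i) := rfl

lemma coeff_DlinV (α β k : ℝ) (ℓ : ℕ) (F : Fin (ℓ+1) → Polynomial ℂ) (m : ℕ) (i : Fin (ℓ+1)) :
    ((DlinV α β k ℓ F) i).coeff m
      = (Bmm β ℓ m).mulVec (fun j => (F j).coeff (m+1)) i
        + (Mmm α β k ℓ m).mulVec (fun j => (F j).coeff m) i := by
  have hscalar : ∀ (p : Polynomial ℂ) (G : Fin (ℓ+1) → Polynomial ℂ) (i : Fin (ℓ+1)),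
      (Matrix.scalar (Fin (ℓ+1)) p).mulVec G i = p * G i := by
    intro p G i; simp [Matrix.scalar, Matrix.mulVec_diagonal]
  have hd : ∀ (G : Fin (ℓ+1) → Polynomial ℂ) (t : ℕ),
      (fun j => (derivative (G j)).coeff t) = ((t:ℂ)+1) • (fun j => (G j).coeff (t+1)) := by
    intro G t; funext j; simp [coeff_derivative, Pi.smul_apply, smul_eq_mul]; ring
  simp only [DlinV, LinearMap.sub_apply, LinearMap.add_apply, LinearMap.comp_apply,
    LinearMap.restrictScalars_apply, Matrix.mulVecLin_apply, Pi.add_apply, Pi.sub_apply,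
    Matrix.sub_mulVec, vderiv_apply]
  rw [hscalar]
  rw [coeff_sub, coeff_add, coeff_sub, coeff_X1X, coeff_mapC_mulVec, coeff_scalarX_mapC_mulVec,
    coeff_mapC_mulVec, hd F m, Matrix.mulVec_smul]
  simp only [Bmm, Mmm, Matrix.add_mulVec, Matrix.smul_mulVec, Matrix.one_mulVec,
    Matrix.neg_mulVec, Pi.smul_apply, Pi.add_apply, Pi.neg_apply, smul_eq_mul]
  match m with
  | 0 => simp; ring
  | (t+1) =>
      rw [if_neg (Nat.succ_ne_zero t), Nat.add_sub_cancel, hd F t, Matrix.mulVec_smul]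
      push_cast
      simp only [Pi.smul_apply, smul_eq_mul]
      ring




variable {n : ℕ}

/-- Downward-induction zero lemma: upper triangular, diag nonzero above r, kernel vector
vanishes above r. -/
lemma ut_ker_support (M : Matrix (Fin n) (Fin n) ℂ)
    (hup : ∀ i j : Fin n, (j:ℕ) < (i:ℕ) → M i j = 0)
    (r : ℕ) (hdiag : ∀ i : Fin n, r < (i:ℕ) → M i i ≠ 0)
    (v : Fin n → ℂ) (hv : M.mulVec v = 0) :
    ∀ i : Fin n, r < (i:ℕ) → v i = 0 := by
  suffices h : ∀ t : ℕ, ∀ i : Fin n, n - (i:ℕ) ≤ t → r < (i:ℕ) → v i = 0 by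
    intro i hi; exact h n i (by omega) hi
  intro t
  induction t with
  | zero => intro i hi _; exact absurd hi (by have := i.isLt; omega)
  | succ t ih =>
      intro i hi hri
      have hrow : M.mulVec v i = 0 := congrFun hv i
      rw [Matrix.mulVec, dotProduct] at hrow
      have hsum : ∑ j : Fin n, M i j * v j = M i i * v i := by
        refine Finset.sum_eq_single i (fun j _ hj => ?_) (by simp)
        rcases lt_or_gt_of_ne (fun h : (j:ℕ) = (i:ℕ) => hj (Fin.ext h)) with h | h
        · rw [hup i j h, zero_mul]
        · rw [ih j (by omega) (by omega), mul_zero]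
      rw [hsum] at hrow
      exact (mul_eq_zero.mp hrow).resolve_left (hdiag i hri)

/-- If the diagonal is nonzero except possibly at `j0`, a kernel vector vanishing at `j0`
is zero. -/
lemma ut_ker_zero (M : Matrix (Fin n) (Fin n) ℂ)
    (hup : ∀ i j : Fin n, (j:ℕ) < (i:ℕ) → M i j = 0)
    (j0 : Fin n) (hdiag : ∀ i : Fin n, i ≠ j0 → M i i ≠ 0)
    (v : Fin n → ℂ) (hv : M.mulVec v = 0) (hv0 : v j0 = 0) : v = 0 := by
  suffices h : ∀ t : ℕ, ∀ i : Fin n, n - (i:ℕ) ≤ t → v i = 0 by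
    funext i; exact h n i (by omega)
  intro t
  induction t with
  | zero => intro i hi; exact absurd hi (by have := i.isLt; omega)
  | succ t ih =>
      intro i hi
      by_cases hij : i = j0
      · rw [hij]; exact hv0
      · have hrow : M.mulVec v i = 0 := congrFun hv i
        rw [Matrix.mulVec, dotProduct] at hrow
        have hsum : ∑ j : Fin n, M i j * v j = M i i * v i := by
          refine Finset.sum_eq_single i (fun j _ hj => ?_) (by simp)
          rcases lt_or_gt_of_ne (fun h : (j:ℕ) = (i:ℕ) => hj (Fin.ext h)) with h | h
          · rw [hup i j h, zero_mul]
          · rw [ih j (by omega), mul_zero]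
        rw [hsum] at hrow
        exact (mul_eq_zero.mp hrow).resolve_left (hdiag i hij)

/-- `finrank` of the kernel of an upper triangular matrix whose diagonal vanishes at most
at `j0` is at most 1. -/
lemma ut_finrank_ker_le_one (M : Matrix (Fin n) (Fin n) ℂ)
    (hup : ∀ i j : Fin n, (j:ℕ) < (i:ℕ) → M i j = 0)
    (j0 : Fin n) (hdiag : ∀ i : Fin n, i ≠ j0 → M i i ≠ 0) :
    Module.finrank ℂ (LinearMap.ker M.mulVecLin) ≤ 1 := by
  have hinj : Function.Injective
      (((LinearMap.proj j0 : (Fin n → ℂ) →ₗ[ℂ] ℂ)).comp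
        (LinearMap.ker M.mulVecLin).subtype) := by
    intro x y hxy
    have hmem : M.mulVec ((x:Fin n → ℂ) - y) = 0 := by
      have hx := x.2; have hy := y.2
      rw [LinearMap.mem_ker, Matrix.mulVecLin_apply] at hx hy
      rw [Matrix.mulVec_sub, hx, hy, sub_zero]
    have h0 : ((x:Fin n → ℂ) - y) j0 = 0 := by
      simpa [sub_eq_zero] using congrArg id hxy
    have := ut_ker_zero M hup j0 hdiag _ hmem h0
    exact Subtype.ext (by rwa [sub_eq_zero] at this)
  calc Module.finrank ℂ (LinearMap.ker M.mulVecLin)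
      ≤ Module.finrank ℂ ℂ := LinearMap.finrank_le_finrank_of_injective hinj
    _ = 1 := Module.finrank_self ℂ

/-- Solvability of an upper triangular system supported in the first `r+1` coordinates. -/
lemma ut_solve (M : Matrix (Fin n) (Fin n) ℂ)
    (hup : ∀ i j : Fin n, (j:ℕ) < (i:ℕ) → M i j = 0)
    (r : ℕ) (hdiag : ∀ i : Fin n, (i:ℕ) ≤ r → M i i ≠ 0)
    (b : Fin n → ℂ) (hb : ∀ i : Fin n, r < (i:ℕ) → b i = 0) :
    ∃ x : Fin n → ℂ, M.mulVec x = b ∧ ∀ i : Fin n, r < (i:ℕ) → x i = 0 := by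
  classical
  set M' : Matrix (Fin n) (Fin n) ℂ := Matrix.of fun i j =>
    if (i:ℕ) ≤ r ∧ (j:ℕ) ≤ r then M i j else if i = j then 1 else 0 with hM'
  have hup' : M'.BlockTriangular _root_.id := by
    intro i j hij
    simp only [hM', Matrix.of_apply]
    have hij' : (j:ℕ) < (i:ℕ) := hij
    split_ifs with h1 h2
    · exact hup i j hij'
    · exact absurd h2 (fun h => absurd h (by intro he; omega))
    · rfl
  have hdiag' : ∀ i : Fin n, M' i i ≠ 0 := by
    intro i
    simp only [hM', Matrix.of_apply]
    split_ifs with h1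
    · exact hdiag i h1.1
    · exact one_ne_zero
  have hdet : M'.det ≠ 0 := by
    rw [Matrix.det_of_upperTriangular hup']
    exact Finset.prod_ne_zero_iff.mpr fun i _ => hdiag' i
  have hunit : IsUnit M'.det := isUnit_iff_ne_zero.mpr hdet
  refine ⟨M'⁻¹.mulVec b, ?_, ?_⟩
  · have hMx : M'.mulVec (M'⁻¹.mulVec b) = b := by
      rw [Matrix.mulVec_mulVec, Matrix.mul_nonsing_inv _ hunit, Matrix.one_mulVec]
    -- first: x vanishes above r
    have hxsupp : ∀ i : Fin n, r < (i:ℕ) → M'⁻¹.mulVec b i = 0 := by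
      intro i hi
      have hrow : M'.mulVec (M'⁻¹.mulVec b) i = b i := congrFun hMx i
      rw [Matrix.mulVec, dotProduct] at hrow
      set x := M'⁻¹.mulVec b
      have hsum : ∑ j : Fin n, M' i j * x j = x i := by
        have : ∀ j : Fin n, M' i j * x j = (if i = j then 1 else 0) * x j := by
          intro j
          simp only [hM', Matrix.of_apply]
          split_ifs with h1 h2 h3
          · omega
          · omega
          · rfl
          · rfl
        rw [Finset.sum_congr rfl fun j _ => this j]
        simp [Finset.sum_ite_eq]
      rw [hsum] at hrow
      rw [hrow]; exact hb i hi
    -- now: M x = b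
    funext i
    set x := M'⁻¹.mulVec b
    have hrow : M'.mulVec x i = b i := congrFun hMx i
    rw [Matrix.mulVec, dotProduct] at hrow ⊢
    by_cases hir : (i:ℕ) ≤ r
    · rw [← hrow]
      refine Finset.sum_congr rfl fun j _ => ?_
      by_cases hjr : (j:ℕ) ≤ r
      · simp only [hM', Matrix.of_apply]
        rw [if_pos (show (i:ℕ) ≤ r ∧ (j:ℕ) ≤ r from ⟨hir, hjr⟩)]
      · rw [hxsupp j (by omega), mul_zero, mul_zero]
    · have : ∀ j : Fin n, M i j * x j = 0 := by
        intro j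
        by_cases hjr : (j:ℕ) ≤ r
        · rw [hup i j (by omega), zero_mul]
        · rw [hxsupp j (by omega), mul_zero]
      rw [Finset.sum_congr rfl fun j _ => this j]
      rw [Finset.sum_const_zero]
      exact (hb i (by omega)).symm
  · intro i hi
    -- repeat support argument
    have hMx : M'.mulVec (M'⁻¹.mulVec b) = b := by
      rw [Matrix.mulVec_mulVec, Matrix.mul_nonsing_inv _ hunit, Matrix.one_mulVec]
    have hrow : M'.mulVec (M'⁻¹.mulVec b) i = b i := congrFun hMx i
    rw [Matrix.mulVec, dotProduct] at hrow
    set x := M'⁻¹.mulVec b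
    have hsum : ∑ j : Fin n, M' i j * x j = x i := by
      have : ∀ j : Fin n, M' i j * x j = (if i = j then 1 else 0) * x j := by
        intro j
        simp only [hM', Matrix.of_apply]
        split_ifs with h1 h2 h3
        · omega
        · omega
        · rfl
        · rfl
      rw [Finset.sum_congr rfl fun j _ => this j]
      simp [Finset.sum_ite_eq]
    rw [hsum] at hrow
    rw [hrow]; exact hb i hi

section AR
variable {α β k : ℝ} {ℓ : ℕ}

/-- At a fixed level, the eigenvalues are pairwise distinct. -/
lemma lamEig_inj_level (hα : -1 < α) (hk1 : k < β + 1) (m : ℕ) {i i' : ℕ}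
    (h : lamEig α β k ℓ m i = lamEig α β k ℓ m i') : i = i' := by
  by_contra hne
  have h1 : ((i:ℝ) - i') * ((m:ℝ) + i + i' + α + β + 1 - k) = 0 := by
    unfold lamEig at h; linear_combination -h
  have hii' : (1:ℝ) ≤ (i:ℝ) + i' := by
    have : 1 ≤ i + i' := by omega
    exact_mod_cast this
  have hm : (0:ℝ) ≤ m := Nat.cast_nonneg m
  have h2 : ((m:ℝ) + i + i' + α + β + 1 - k) > 0 := by nlinarith
  have h3 : (i:ℝ) - i' ≠ 0 := by
    intro h0
    exact hne (by exact_mod_cast sub_eq_zero.mp h0)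
  rcases mul_eq_zero.mp h1 with h | h
  · exact h3 h
  · linarith

/-- Cross-level gap: if `λ_i(t) = λ_{j0}(m0)` with `t < m0`, then `i ≥ j0 + (m0 - t) + 1`. -/
lemma lamEig_cross_gap (hα : -1 < α) (hβ : -1 < β) (hk0 : 0 < k) (hk1 : k < β + 1)
    (hℓ : 0 < ℓ) {t m0 i j0 : ℕ} (ht : t < m0) (hi : i ≤ ℓ) (hj0 : j0 ≤ ℓ)
    (h : lamEig α β k ℓ t i = lamEig α β k ℓ m0 j0) :
    j0 + (m0 - t) + 1 ≤ i := by
  have h1 : (1:ℝ) ≤ (m0:ℝ) := by exact_mod_cast Nat.one_le_iff_ne_zero.mpr (by omega)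
  have h2 : (1:ℝ) ≤ (ℓ:ℝ) := by exact_mod_cast hℓ
  have h3 : (0:ℝ) ≤ (t:ℝ) := Nat.cast_nonneg t
  have h4 : (0:ℝ) ≤ (j0:ℝ) := Nat.cast_nonneg j0
  have hIm : (0:ℝ) ≤ (i:ℝ) := Nat.cast_nonneg i
  have hiℓ : (i:ℝ) ≤ ℓ := by exact_mod_cast hi
  have hm0 : (0:ℝ) ≤ (m0:ℝ) := Nat.cast_nonneg m0
  have hA : (0:ℝ) < (m0:ℝ) + t + j0 + α + β + ℓ + 1 := by nlinarith
  have hid : ((m0:ℝ) - t) * ((m0:ℝ) + t + j0 + α + β + ℓ + 1)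
      = ((i:ℝ) - j0) * ((t:ℝ) + i + j0 + α + β + 1 - k) := by
    unfold lamEig at h; linear_combination h
  have hmt : (0:ℝ) < (m0:ℝ) - t := by
    have : (t:ℝ) < m0 := by exact_mod_cast ht
    linarith
  have hstep1 : j0 < i := by
    by_contra hle
    push_neg at hle
    rcases Nat.lt_or_ge i j0 with hlt | hge
    · have hij : (i:ℝ) - j0 < 0 := by
        have : (i:ℝ) < j0 := by exact_mod_cast hlt
        linarith
      have hj1 : (1:ℝ) ≤ (j0:ℝ) := by exact_mod_cast Nat.one_le_iff_ne_zero.mpr (by omega)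
      have hB : (0:ℝ) < (t:ℝ) + i + j0 + α + β + 1 - k := by nlinarith
      have hneg : ((i:ℝ) - j0) * ((t:ℝ) + i + j0 + α + β + 1 - k) < 0 :=
        mul_neg_of_neg_of_pos hij hB
      linarith [mul_pos hmt hA]
    · have heq : i = j0 := by omega
      subst heq
      have h0 : ((i:ℝ) - i) * ((t:ℝ) + i + i + α + β + 1 - k) = 0 := by ring
      rw [h0] at hid
      linarith [mul_pos hmt hA]
  have hij : (0:ℝ) < (i:ℝ) - j0 := by
    have : (j0:ℝ) < i := by exact_mod_cast hstep1
    linarith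
  have hB : (0:ℝ) < (t:ℝ) + i + j0 + α + β + 1 - k := by
    by_contra hBn
    push_neg at hBn
    have : ((i:ℝ) - j0) * ((t:ℝ) + i + j0 + α + β + 1 - k) ≤ 0 :=
      mul_nonpos_of_nonneg_of_nonpos hij.le hBn
    linarith [mul_pos hmt hA]
  have hAB : ((t:ℝ) + i + j0 + α + β + 1 - k) < (m0:ℝ) + t + j0 + α + β + ℓ + 1 := by
    nlinarith
  have hfin : (m0:ℝ) - t < (i:ℝ) - j0 := by
    have hx : ((m0:ℝ)-t)*((t:ℝ)+i+j0+α+β+1-k) < ((i:ℝ)-j0)*((t:ℝ)+i+j0+α+β+1-k) :=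
      calc ((m0:ℝ)-t)*((t:ℝ)+i+j0+α+β+1-k)
          < ((m0:ℝ)-t)*((m0:ℝ) + t + j0 + α + β + ℓ + 1) := by
            exact mul_lt_mul_of_pos_left hAB hmt
        _ = ((i:ℝ)-j0)*((t:ℝ)+i+j0+α+β+1-k) := hid
    exact (mul_lt_mul_iff_left₀ hB).mp hx
  have hfin' : (m0:ℕ) - t < i - j0 := by
    have hcast : ((m0 - t : ℕ) : ℝ) = (m0:ℝ) - t := by
      push_cast [Nat.cast_sub ht.le]; ring
    have hcast2 : ((i - j0 : ℕ) : ℝ) = (i:ℝ) - j0 := by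
      push_cast [Nat.cast_sub hstep1.le]; ring
    have : ((m0 - t : ℕ) : ℝ) < ((i - j0 : ℕ) : ℝ) := by rw [hcast, hcast2]; exact hfin
    exact_mod_cast this
  omega

/-- Bound: levels carrying a given eigenvalue are bounded. -/
lemma lamEig_level_bound (c : ℝ) :
    ∃ N : ℕ, ∀ m : ℕ, ∀ i : ℕ, i ≤ ℓ → lamEig α β k ℓ m i = c → m < N := by
  set a : ℝ := |α + β + ℓ + 1| with ha
  set b : ℝ := |c| + (ℓ:ℝ) * ((ℓ:ℝ) + |α + β + 1 - k|) with hbd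
  have hb0 : 0 ≤ b := by positivity
  have ha0 : 0 ≤ a := abs_nonneg _
  refine ⟨Nat.ceil (a + b) + 2, ?_⟩
  intro m i hi hlam
  have hkey : (m:ℝ) < a + b + 1 := by
    by_contra hge
    push_neg at hge
    have hm1 : (1:ℝ) ≤ (m:ℝ) := by linarith
    have hIm : (0:ℝ) ≤ (i:ℝ) := Nat.cast_nonneg i
    have hiℓ : (i:ℝ) ≤ ℓ := by exact_mod_cast hi
    have h1 : (m:ℝ)*(m:ℝ) + (m:ℝ)*(α+β+(ℓ:ℝ)+1) + (m:ℝ)*(i:ℝ) + (i:ℝ)*(i:ℝ)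
        + (i:ℝ)*(α+β+1-k) = -c := by
      unfold lamEig at hlam; linear_combination -hlam
    have e0 : (0:ℝ) ≤ (m:ℝ)*(i:ℝ) := by positivity
    have e1 : -((ℓ:ℝ) * |α+β+1-k|) ≤ (i:ℝ)*(α+β+1-k) := by
      nlinarith [mul_nonneg (sub_nonneg.mpr hiℓ) (abs_nonneg (α+β+1-k)),
        mul_le_mul_of_nonneg_left (neg_abs_le (α+β+1-k)) hIm]
    have e2 : -((m:ℝ) * a) ≤ (m:ℝ)*(α+β+(ℓ:ℝ)+1) := by
      nlinarith [mul_le_mul_of_nonneg_left (neg_abs_le (α+β+(ℓ:ℝ)+1)) (Nat.cast_nonneg (α := ℝ) m)]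
    have e3 : (m:ℝ)*((m:ℝ) - a) ≤ b := by
      have hc : -c ≤ |c| := neg_le_abs c
      nlinarith [sq_nonneg (i:ℝ), sq_nonneg (ℓ:ℝ)]
    have e4 : b + 1 ≤ (m:ℝ)*((m:ℝ) - a) := by nlinarith
    linarith
  have : (m:ℝ) < ((Nat.ceil (a+b) + 2 : ℕ) : ℝ) := by
    push_cast
    have := Nat.le_ceil (a + b)
    linarith
  exact_mod_cast this

end AR

/-! ### Structure of the matrices `Bmm` and `Amm` -/

def Amm (α β k : ℝ) (ℓ : ℕ) (lam : ℂ) (m : ℕ) : Matrix (Fin (ℓ+1)) (Fin (ℓ+1)) ℂ :=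
  Mmm α β k ℓ m - lam • 1

section MatStruct
variable {α β k : ℝ} {ℓ : ℕ}

lemma Bmm_lower (β : ℝ) (ℓ m : ℕ) :
    ∀ i j : Fin (ℓ+1), (i:ℕ) < (j:ℕ) → Bmm β ℓ m i j = 0 := by
  intro i j hij
  have h1 : ¬((i:ℕ) = (j:ℕ)) := by omega
  have h2 : ¬((i:ℕ) = (j:ℕ)+1) := by omega
  have h3 : i ≠ j := fun h => h1 (by rw [h])
  simp [Bmm, Cmat, Matrix.one_apply, h1, h2, h3]

lemma Bmm_entry_zero (β : ℝ) (ℓ m : ℕ) (i j : Fin (ℓ+1))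
    (h1 : ¬((i:ℕ) = (j:ℕ))) (h2 : ¬((i:ℕ) = (j:ℕ)+1)) : Bmm β ℓ m i j = 0 := by
  have h3 : i ≠ j := fun h => h1 (by rw [h])
  simp [Bmm, Cmat, Matrix.one_apply, h1, h2, h3]

lemma Bmm_diag (β : ℝ) (ℓ m : ℕ) (i : Fin (ℓ+1)) :
    Bmm β ℓ m i i = ((m:ℂ)+1) * ((m:ℂ) + ((β:ℂ) + 1 + 2*((i:ℕ):ℂ))) := by
  have h2 : ¬((i:ℕ) = (i:ℕ)+1) := by omega
  simp [Bmm, Cmat, Matrix.one_apply, h2]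

lemma Bmm_det_isUnit (hβ : -1 < β) (ℓ m : ℕ) : IsUnit (Bmm β ℓ m).det := by
  have htri : (Bmm β ℓ m).BlockTriangular ⇑OrderDual.toDual := by
    intro i j hij
    exact Bmm_lower β ℓ m i j hij
  rw [Matrix.det_of_lowerTriangular _ htri]
  apply isUnit_iff_ne_zero.mpr
  apply Finset.prod_ne_zero_iff.mpr
  intro i _
  rw [Bmm_diag]
  apply mul_ne_zero
  · have : ((m+1 : ℕ) : ℂ) ≠ 0 := Nat.cast_ne_zero.mpr (Nat.succ_ne_zero m)
    push_cast at this
    exact this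
  · have hr : ((m:ℝ) + (β + 1 + 2*((i:ℕ):ℝ))) > 0 := by
      have := Nat.cast_nonneg (α := ℝ) m
      have := Nat.cast_nonneg (α := ℝ) (i:ℕ)
      linarith
    have h2 : (((m:ℝ) + (β + 1 + 2*((i:ℕ):ℝ)) : ℝ) : ℂ) ≠ 0 :=
      Complex.ofReal_ne_zero.mpr (ne_of_gt hr)
    push_cast at h2
    exact h2

lemma Amm_upper (lam : ℂ) (m : ℕ) :
    ∀ i j : Fin (ℓ+1), (j:ℕ) < (i:ℕ) → Amm α β k ℓ lam m i j = 0 := by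
  intro i j hij
  have h1 : ¬((i:ℕ) = (j:ℕ)) := by omega
  have h2 : ¬((j:ℕ) = (i:ℕ)+1) := by omega
  have h3 : i ≠ j := fun h => h1 (by rw [h])
  simp [Amm, Mmm, Umat, Vmat, Matrix.one_apply, h1, h2, h3]

lemma Amm_diag (lam : ℂ) (m : ℕ) (i : Fin (ℓ+1)) :
    Amm α β k ℓ lam m i i = (((lamEig α β k ℓ m i : ℝ)) : ℂ) - lam := by
  have h2 : ¬((i:ℕ) = (i:ℕ)+1) := by omega
  simp [Amm, Mmm, Umat, Vmat, Matrix.one_apply, h2]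
  push_cast [lamEig]
  ring

lemma Amm_det (lam : ℂ) (m : ℕ) :
    (Amm α β k ℓ lam m).det = ∏ i : Fin (ℓ+1), ((((lamEig α β k ℓ m i):ℝ):ℂ) - lam) := by
  have htri : (Amm α β k ℓ lam m).BlockTriangular _root_.id := by
    intro i j hij
    exact Amm_upper lam m i j hij
  rw [Matrix.det_of_upperTriangular htri]
  exact Finset.prod_congr rfl fun i _ => Amm_diag lam m i

lemma Bmm_mulVec_support (β : ℝ) (ℓ m : ℕ) (y : Fin (ℓ+1) → ℂ) (r : ℕ)
    (hy : ∀ j : Fin (ℓ+1), r < (j:ℕ) → y j = 0) :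
    ∀ i : Fin (ℓ+1), r + 1 < (i:ℕ) → (Bmm β ℓ m).mulVec y i = 0 := by
  intro i hi
  rw [Matrix.mulVec, dotProduct]
  apply Finset.sum_eq_zero
  intro j _
  by_cases h1 : (i:ℕ) = (j:ℕ)
  · rw [hy j (by omega), mul_zero]
  · by_cases h2 : (i:ℕ) = (j:ℕ)+1
    · rw [hy j (by omega), mul_zero]
    · rw [Bmm_entry_zero β ℓ m i j h1 h2, zero_mul]

end MatStruct

/-! ### The coefficient recurrence -/

def fcoe (ℓ : ℕ) (F : Fin (ℓ+1) → Polynomial ℂ) (m : ℕ) : Fin (ℓ+1) → ℂ :=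
  fun i => (F i).coeff m

section Recur
variable {α β k : ℝ} {ℓ : ℕ}

lemma mem_Vlam_iff (lam : ℂ) (F : Fin (ℓ+1) → Polynomial ℂ) :
    F ∈ Vlam α β k ℓ lam ↔ ∀ m : ℕ,
      (Bmm β ℓ m).mulVec (fcoe ℓ F (m+1)) + (Amm α β k ℓ lam m).mulVec (fcoe ℓ F m) = 0 := by
  have key : ∀ (m : ℕ) (i : Fin (ℓ+1)),
      ((Bmm β ℓ m).mulVec (fcoe ℓ F (m+1)) + (Amm α β k ℓ lam m).mulVec (fcoe ℓ F m)) i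
        = ((DlinV α β k ℓ F) i).coeff m - lam * fcoe ℓ F m i := by
    intro m i
    rw [coeff_DlinV]
    have e1 : (fun j => (F j).coeff (m+1)) = fcoe ℓ F (m+1) := rfl
    have e2 : (fun j => (F j).coeff m) = fcoe ℓ F m := rfl
    rw [e1, e2]
    simp only [Pi.add_apply, Amm, Matrix.sub_mulVec, Matrix.smul_mulVec,
      Matrix.one_mulVec, Pi.sub_apply, Pi.smul_apply, smul_eq_mul]
    ring
  rw [Vlam, LinearMap.mem_ker, LinearMap.sub_apply, LinearMap.smul_apply, LinearMap.id_apply,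
    sub_eq_zero]
  constructor
  · intro h m
    funext i
    rw [Pi.zero_apply, key m i, h]
    simp [Pi.smul_apply, coeff_smul, fcoe]
  · intro h
    funext i
    apply Polynomial.ext
    intro m
    have h1 := congrFun (h m) i
    rw [Pi.zero_apply, key m i] at h1
    have h2 := sub_eq_zero.mp h1
    rw [h2]
    simp [Pi.smul_apply, coeff_smul, fcoe]

end Recur

/-! ### Transfer matrices -/

def Tmm (α β k : ℝ) (ℓ : ℕ) (lam : ℂ) (m : ℕ) : Matrix (Fin (ℓ+1)) (Fin (ℓ+1)) ℂ :=
  -((Bmm β ℓ m)⁻¹ * Amm α β k ℓ lam m)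

def Pmm (α β k : ℝ) (ℓ : ℕ) (lam : ℂ) : ℕ → Matrix (Fin (ℓ+1)) (Fin (ℓ+1)) ℂ
  | 0 => 1
  | m+1 => Tmm α β k ℓ lam m * Pmm α β k ℓ lam m

lemma Pmm_zero (α β k : ℝ) (ℓ : ℕ) (lam : ℂ) : Pmm α β k ℓ lam 0 = 1 := rfl

lemma Pmm_succ (α β k : ℝ) (ℓ : ℕ) (lam : ℂ) (m : ℕ) :
    Pmm α β k ℓ lam (m+1) = Tmm α β k ℓ lam m * Pmm α β k ℓ lam m := rfl

section Transfer
variable {α β k : ℝ} {ℓ : ℕ}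

lemma step_forward (hβ : -1 < β) (lam : ℂ) (m : ℕ) (f f' : Fin (ℓ+1) → ℂ)
    (h : (Bmm β ℓ m).mulVec f' + (Amm α β k ℓ lam m).mulVec f = 0) :
    f' = (Tmm α β k ℓ lam m).mulVec f := by
  have hB := Bmm_det_isUnit hβ ℓ m
  have h2 : (Bmm β ℓ m).mulVec f' = -((Amm α β k ℓ lam m).mulVec f) :=
    eq_neg_of_add_eq_zero_left h
  calc f' = ((Bmm β ℓ m)⁻¹ * Bmm β ℓ m).mulVec f' := by
        rw [Matrix.nonsing_inv_mul _ hB, Matrix.one_mulVec]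
    _ = (Bmm β ℓ m)⁻¹.mulVec ((Bmm β ℓ m).mulVec f') := by rw [← Matrix.mulVec_mulVec]
    _ = (Bmm β ℓ m)⁻¹.mulVec (-((Amm α β k ℓ lam m).mulVec f)) := by rw [h2]
    _ = -(((Bmm β ℓ m)⁻¹ * Amm α β k ℓ lam m).mulVec f) := by
        rw [Matrix.mulVec_neg, Matrix.mulVec_mulVec]
    _ = (Tmm α β k ℓ lam m).mulVec f := by rw [Tmm, Matrix.neg_mulVec]

lemma step_backward (hβ : -1 < β) (lam : ℂ) (m : ℕ) (f : Fin (ℓ+1) → ℂ) :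
    (Bmm β ℓ m).mulVec ((Tmm α β k ℓ lam m).mulVec f)
      = -((Amm α β k ℓ lam m).mulVec f) := by
  have hB := Bmm_det_isUnit hβ ℓ m
  rw [Tmm, Matrix.neg_mulVec, Matrix.mulVec_neg, Matrix.mulVec_mulVec, ← Matrix.mul_assoc,
    Matrix.mul_nonsing_inv _ hB, Matrix.one_mul]

lemma ker_Tmm_iff (hβ : -1 < β) (lam : ℂ) (m : ℕ) (v : Fin (ℓ+1) → ℂ) :
    (Tmm α β k ℓ lam m).mulVec v = 0 ↔ (Amm α β k ℓ lam m).mulVec v = 0 := by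
  constructor
  · intro h
    have h2 := step_backward (α := α) (k := k) hβ lam m v
    rw [h, Matrix.mulVec_zero] at h2
    exact (neg_eq_zero.mp h2.symm)
  · intro h
    rw [Tmm, Matrix.neg_mulVec, ← Matrix.mulVec_mulVec, h, Matrix.mulVec_zero, neg_zero]

lemma Pmm_factor (lam : ℂ) : ∀ s t : ℕ, s ≤ t →
    ∃ Q : Matrix (Fin (ℓ+1)) (Fin (ℓ+1)) ℂ, Pmm α β k ℓ lam t = Q * Pmm α β k ℓ lam s := by
  intro s t hst
  induction t, hst using Nat.le_induction with
  | base => exact ⟨1, (Matrix.one_mul _).symm⟩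
  | succ t hst ih =>
      obtain ⟨Q, hQ⟩ := ih
      exact ⟨Tmm α β k ℓ lam t * Q, by rw [Pmm_succ, hQ, Matrix.mul_assoc]⟩

lemma Pmm_zero_of_ge (lam : ℂ) (x : Fin (ℓ+1) → ℂ) (s : ℕ)
    (hx : (Pmm α β k ℓ lam s).mulVec x = 0) :
    ∀ t : ℕ, s ≤ t → (Pmm α β k ℓ lam t).mulVec x = 0 := by
  intro t hst
  obtain ⟨Q, hQ⟩ := Pmm_factor (α := α) (k := k) lam s t hst
  rw [hQ, ← Matrix.mulVec_mulVec, hx, Matrix.mulVec_zero]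

/-- Solutions propagate: the coefficients of an element of `Vlam` are obtained from the
degree-0 coefficient by the transfer matrices. -/
lemma sol_coeffs (hβ : -1 < β) (lam : ℂ) (F : Fin (ℓ+1) → Polynomial ℂ) (hF : F ∈ Vlam α β k ℓ lam) :
    ∀ m : ℕ, fcoe ℓ F m = (Pmm α β k ℓ lam m).mulVec (fcoe ℓ F 0) := by
  intro m
  induction m with
  | zero => rw [Pmm_zero, Matrix.one_mulVec]
  | succ m ih =>
      have h := (mem_Vlam_iff lam F).mp hF m
      rw [step_forward hβ lam m _ _ h, ih, Pmm_succ, Matrix.mulVec_mulVec]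

end Transfer

/-! ### Kernel dimension of a composition -/

lemma finrank_ker_comp {V : Type*} [AddCommGroup V] [Module ℂ V] [FiniteDimensional ℂ V]
    (f g : V →ₗ[ℂ] V) :
    Module.finrank ℂ (LinearMap.ker (g ∘ₗ f))
      ≤ Module.finrank ℂ (LinearMap.ker f) + Module.finrank ℂ (LinearMap.ker g) := by
  classical
  set φ : LinearMap.ker (g ∘ₗ f) →ₗ[ℂ] V := f ∘ₗ (LinearMap.ker (g ∘ₗ f)).subtype with hφ
  have hrange : LinearMap.range φ ≤ LinearMap.ker g := by
    rintro _ ⟨x, rfl⟩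
    have hx := x.2
    rw [LinearMap.mem_ker, LinearMap.comp_apply] at hx
    simpa [hφ, LinearMap.mem_ker] using hx
  have h1 := LinearMap.finrank_range_add_finrank_ker φ
  have h2 : Module.finrank ℂ (LinearMap.range φ) ≤ Module.finrank ℂ (LinearMap.ker g) :=
    Submodule.finrank_mono hrange
  have hmem : ∀ x : LinearMap.ker φ, (((x : LinearMap.ker (g ∘ₗ f)) : V)) ∈ LinearMap.ker f := by
    intro x
    have hx := x.2
    rw [LinearMap.mem_ker] at hx ⊢
    exact hx
  set ψ : LinearMap.ker φ →ₗ[ℂ] LinearMap.ker f :=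
    LinearMap.codRestrict (LinearMap.ker f)
      (((LinearMap.ker (g ∘ₗ f)).subtype) ∘ₗ (LinearMap.ker φ).subtype) hmem with hψ
  have hψinj : Function.Injective ψ := by
    intro a b hab
    have : (((a : LinearMap.ker (g ∘ₗ f)) : V)) = ((b : LinearMap.ker (g ∘ₗ f)) : V) := by
      have := congrArg (Subtype.val) hab
      exact this
    exact Subtype.ext (Subtype.ext this)
  have h3 : Module.finrank ℂ (LinearMap.ker φ) ≤ Module.finrank ℂ (LinearMap.ker f) :=
    LinearMap.finrank_le_finrank_of_injective hψinj
  omega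

/-! ### The downward chain construction -/

section Chain
variable {α β k : ℝ} {ℓ : ℕ}

lemma i_le_ell (i : Fin (ℓ+1)) : (i:ℕ) ≤ ℓ := by omega

lemma chain_aux (hα : -1 < α) (hβ : -1 < β) (hk0 : 0 < k) (hk1 : k < β + 1) (hℓ : 0 < ℓ)
    (lam0 : ℝ) (m0 : ℕ) (i0 : Fin (ℓ+1)) (hi0 : lamEig α β k ℓ m0 (i0:ℕ) = lam0)
    (v : Fin (ℓ+1) → ℂ) (hv : (Amm α β k ℓ (lam0:ℂ) m0).mulVec v = 0) :
    ∀ s : ℕ, s ≤ m0 → ∃ g : ℕ → Fin (ℓ+1) → ℂ,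
      g m0 = v ∧
      (∀ t, m0 - s ≤ t → t < m0 →
        (Bmm β ℓ t).mulVec (g (t+1)) + (Amm α β k ℓ (lam0:ℂ) t).mulVec (g t) = 0) ∧
      (∀ t, m0 - s ≤ t → t ≤ m0 → ∀ i : Fin (ℓ+1), (i0:ℕ) + (m0 - t) < (i:ℕ) → g t i = 0) := by
  intro s
  induction s with
  | zero =>
      intro _
      classical
      refine ⟨fun t => if t = m0 then v else 0, by simp, ?_, ?_⟩
      · intro t h1 h2; omega
      · intro t h1 h2 i hi
        have ht : t = m0 := by omega
        have hrw : (fun t_1 : ℕ => if t_1 = m0 then v else 0) t = v := by rw [ht]; simp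
        rw [hrw]
        have hmt : m0 - t = 0 := by omega
        refine ut_ker_support (Amm α β k ℓ (lam0:ℂ) m0) (Amm_upper _ _) (i0:ℕ) ?_ v hv i
          (by omega)
        intro i' hi'
        rw [Amm_diag]
        intro h0
        have h0' : lamEig α β k ℓ m0 (i':ℕ) = lam0 := by
          have := sub_eq_zero.mp h0
          exact_mod_cast this
        have := lamEig_inj_level hα hk1 m0 (h0'.trans hi0.symm)
        omega
  | succ s ih =>
      intro hs1
      obtain ⟨g, hg0, hgrec, hgsupp⟩ := ih (by omega)
      set t0 := m0 - (s+1) with ht0def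
      have ht0lt : t0 < m0 := by omega
      have ht01 : t0 + 1 = m0 - s := by omega
      set b := -((Bmm β ℓ t0).mulVec (g (t0+1))) with hbdef
      have hb : ∀ i : Fin (ℓ+1), (i0:ℕ) + (m0 - t0) < (i:ℕ) → b i = 0 := by
        intro i hi
        have hsup : ∀ j' : Fin (ℓ+1), (i0:ℕ) + (m0 - (t0+1)) < (j':ℕ) → g (t0+1) j' = 0 := by
          intro j' hj'
          exact hgsupp (t0+1) (by omega) (by omega) j' hj'
        have := Bmm_mulVec_support β ℓ t0 (g (t0+1)) ((i0:ℕ) + (m0 - (t0+1))) hsup i (by omega)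
        rw [hbdef, Pi.neg_apply, this, neg_zero]
      have hdiag : ∀ i : Fin (ℓ+1), (i:ℕ) ≤ (i0:ℕ) + (m0 - t0) →
          Amm α β k ℓ (lam0:ℂ) t0 i i ≠ 0 := by
        intro i hi
        rw [Amm_diag]
        intro h0
        have h0' : lamEig α β k ℓ t0 (i:ℕ) = lam0 := by
          have := sub_eq_zero.mp h0
          exact_mod_cast this
        have := lamEig_cross_gap hα hβ hk0 hk1 hℓ ht0lt (i_le_ell i) (i_le_ell i0)
          (h0'.trans hi0.symm)
        omega
      obtain ⟨x, hx, hxsupp⟩ := ut_solve (Amm α β k ℓ (lam0:ℂ) t0) (Amm_upper _ _)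
        ((i0:ℕ) + (m0 - t0)) hdiag b hb
      classical
      refine ⟨Function.update g t0 x, ?_, ?_, ?_⟩
      · rw [Function.update_of_ne (by omega) x g]
        exact hg0
      · intro t h1 h2
        by_cases ht : t = t0
        · subst ht
          rw [Function.update_self, Function.update_of_ne (by omega) x g, hx, hbdef]
          exact add_neg_cancel _
        · rw [Function.update_of_ne ht x g, Function.update_of_ne (by omega) x g]
          exact hgrec t (by omega) h2
      · intro t h1 h2 i hi
        by_cases ht : t = t0
        · subst ht
          rw [Function.update_self]
          exact hxsupp i hi
        · rw [Function.update_of_ne ht x g]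
          exact hgsupp t (by omega) h2 i hi

lemma exists_kernel_jump (hα : -1 < α) (hβ : -1 < β) (hk0 : 0 < k) (hk1 : k < β + 1)
    (hℓ : 0 < ℓ) (lam0 : ℝ) (m0 : ℕ) (i0 : Fin (ℓ+1))
    (hi0 : lamEig α β k ℓ m0 (i0:ℕ) = lam0) :
    ∃ x : Fin (ℓ+1) → ℂ, (Pmm α β k ℓ (lam0:ℂ) m0).mulVec x ≠ 0 ∧
      (Pmm α β k ℓ (lam0:ℂ) (m0+1)).mulVec x = 0 := by
  have hdet : (Amm α β k ℓ (lam0:ℂ) m0).det = 0 := by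
    rw [Amm_det]
    apply Finset.prod_eq_zero (Finset.mem_univ i0)
    rw [hi0, sub_self]
  obtain ⟨v, hv0, hv⟩ := Matrix.exists_mulVec_eq_zero_iff.mpr hdet
  obtain ⟨g, hg0, hgrec, -⟩ :=
    chain_aux hα hβ hk0 hk1 hℓ lam0 m0 i0 hi0 v hv m0 le_rfl
  have hPt : ∀ t, t ≤ m0 → (Pmm α β k ℓ (lam0:ℂ) t).mulVec (g 0) = g t := by
    intro t
    induction t with
    | zero => intro _; rw [Pmm_zero, Matrix.one_mulVec]
    | succ t iht =>
        intro ht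
        rw [Pmm_succ, ← Matrix.mulVec_mulVec, iht (by omega)]
        exact (step_forward hβ (lam0:ℂ) t _ _ (hgrec t (by omega) (by omega))).symm
  refine ⟨g 0, ?_, ?_⟩
  · rw [hPt m0 le_rfl, hg0]; exact hv0
  · rw [Pmm_succ, ← Matrix.mulVec_mulVec, hPt m0 le_rfl, hg0]
    exact (ker_Tmm_iff hβ (lam0:ℂ) m0 v).mpr hv

end Chain

/-! ### Kernel facts for `Amm` and the dimension count -/

section Dim
variable {α β k : ℝ} {ℓ : ℕ}

lemma ker_Amm_eq_bot (lam0 : ℝ) (m : ℕ)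
    (hns : ∀ i : Fin (ℓ+1), lamEig α β k ℓ m (i:ℕ) ≠ lam0) :
    LinearMap.ker (Amm α β k ℓ (lam0:ℂ) m).mulVecLin = ⊥ := by
  have hdet : (Amm α β k ℓ (lam0:ℂ) m).det ≠ 0 := by
    rw [Amm_det]
    apply Finset.prod_ne_zero_iff.mpr
    intro i _
    intro h0
    exact hns i (by exact_mod_cast sub_eq_zero.mp h0)
  rw [Submodule.eq_bot_iff]
  intro v hv
  by_contra hv0
  exact hdet (Matrix.exists_mulVec_eq_zero_iff.mp
    ⟨v, hv0, by rwa [LinearMap.mem_ker, Matrix.mulVecLin_apply] at hv⟩)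

lemma finrank_ker_Amm_le_one (hα : -1 < α) (hk1 : k < β + 1) (lam0 : ℝ) (m : ℕ) :
    Module.finrank ℂ (LinearMap.ker (Amm α β k ℓ (lam0:ℂ) m).mulVecLin) ≤ 1 := by
  classical
  by_cases hs : ∃ i : Fin (ℓ+1), lamEig α β k ℓ m (i:ℕ) = lam0
  · obtain ⟨i0, hi0⟩ := hs
    refine ut_finrank_ker_le_one _ (Amm_upper _ _) i0 ?_
    intro i hne
    rw [Amm_diag]
    intro h0
    have h0' : lamEig α β k ℓ m (i:ℕ) = lam0 := by exact_mod_cast sub_eq_zero.mp h0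
    exact hne (Fin.ext (lamEig_inj_level hα hk1 m (h0'.trans hi0.symm)))
  · push_neg at hs
    rw [ker_Amm_eq_bot lam0 m hs, finrank_bot]
    omega

lemma ker_Tmm_eq_ker_Amm (hβ : -1 < β) (lam0 : ℝ) (m : ℕ) :
    LinearMap.ker (Tmm α β k ℓ (lam0:ℂ) m).mulVecLin
      = LinearMap.ker (Amm α β k ℓ (lam0:ℂ) m).mulVecLin := by
  ext v
  rw [LinearMap.mem_ker, LinearMap.mem_ker, Matrix.mulVecLin_apply, Matrix.mulVecLin_apply]
  exact ker_Tmm_iff hβ (lam0:ℂ) m v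

lemma ker_Pmm_mono (lam0 : ℝ) (t : ℕ) :
    LinearMap.ker (Pmm α β k ℓ (lam0:ℂ) t).mulVecLin
      ≤ LinearMap.ker (Pmm α β k ℓ (lam0:ℂ) (t+1)).mulVecLin := by
  intro x hx
  rw [LinearMap.mem_ker, Matrix.mulVecLin_apply] at hx ⊢
  rw [Pmm_succ, ← Matrix.mulVec_mulVec, hx, Matrix.mulVec_zero]

lemma finrank_ker_Pmm (hα : -1 < α) (hβ : -1 < β) (hk0 : 0 < k) (hk1 : k < β + 1)
    (hℓ : 0 < ℓ) (lam0 : ℝ) :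
    ∀ t : ℕ, Module.finrank ℂ (LinearMap.ker (Pmm α β k ℓ (lam0:ℂ) t).mulVecLin)
      = ((Finset.range t).filter
          (fun m => ∃ i : Fin (ℓ+1), lamEig α β k ℓ m (i:ℕ) = lam0)).card := by
  classical
  intro t
  induction t with
  | zero =>
      have h0 : LinearMap.ker (Pmm α β k ℓ (lam0:ℂ) 0).mulVecLin = ⊥ := by
        rw [eq_bot_iff]
        intro v hv
        rw [LinearMap.mem_ker, Matrix.mulVecLin_apply, Pmm_zero, Matrix.one_mulVec] at hv
        simp [hv]
      rw [h0, finrank_bot]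
      simp
  | succ t ih =>
      have hup : Module.finrank ℂ (LinearMap.ker (Pmm α β k ℓ (lam0:ℂ) (t+1)).mulVecLin)
          ≤ Module.finrank ℂ (LinearMap.ker (Pmm α β k ℓ (lam0:ℂ) t).mulVecLin)
            + Module.finrank ℂ (LinearMap.ker (Amm α β k ℓ (lam0:ℂ) t).mulVecLin) := by
        rw [Pmm_succ, Matrix.mulVecLin_mul, ← ker_Tmm_eq_ker_Amm hβ lam0 t]
        exact finrank_ker_comp _ _
      have hmono := ker_Pmm_mono (α := α) (β := β) (k := k) (ℓ := ℓ) lam0 t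
      rw [Finset.range_add_one, Finset.filter_insert]
      by_cases hs : ∃ i : Fin (ℓ+1), lamEig α β k ℓ t (i:ℕ) = lam0
      · obtain ⟨i0, hi0⟩ := hs
        obtain ⟨x, hx1, hx2⟩ := exists_kernel_jump hα hβ hk0 hk1 hℓ lam0 t i0 hi0
        have hlt : LinearMap.ker (Pmm α β k ℓ (lam0:ℂ) t).mulVecLin
            < LinearMap.ker (Pmm α β k ℓ (lam0:ℂ) (t+1)).mulVecLin := by
          refine lt_of_le_of_ne hmono ?_
          intro he
          have hx2' : x ∈ LinearMap.ker (Pmm α β k ℓ (lam0:ℂ) (t+1)).mulVecLin := by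
            rw [LinearMap.mem_ker, Matrix.mulVecLin_apply]; exact hx2
          rw [← he, LinearMap.mem_ker, Matrix.mulVecLin_apply] at hx2'
          exact hx1 hx2'
        have hlow := Submodule.finrank_lt_finrank_of_lt hlt
        have hA := finrank_ker_Amm_le_one (ℓ := ℓ) hα hk1 lam0 t
        rw [if_pos ⟨i0, hi0⟩, Finset.card_insert_of_notMem (by simp), ← ih]
        omega
      · have hA : LinearMap.ker (Amm α β k ℓ (lam0:ℂ) t).mulVecLin = ⊥ :=
          ker_Amm_eq_bot lam0 t (by push_neg at hs; exact hs)
        have hlow := Submodule.finrank_mono hmono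
        rw [if_neg hs, ← ih]
        rw [hA, finrank_bot] at hup
        omega

end Dim

/-! ### Bridge between polynomial solutions and transfer kernels -/

def DW (ℓ w : ℕ) : Submodule ℂ (Fin (ℓ+1) → Polynomial ℂ) :=
  Submodule.pi Set.univ fun _ : Fin (ℓ+1) => Polynomial.degreeLE ℂ (w : WithBot ℕ)

def cmap (ℓ m : ℕ) : (Fin (ℓ+1) → Polynomial ℂ) →ₗ[ℂ] (Fin (ℓ+1) → ℂ) :=
  LinearMap.pi fun i => (Polynomial.lcoeff ℂ m) ∘ₗ LinearMap.proj i

lemma cmap_apply (ℓ m : ℕ) (F : Fin (ℓ+1) → Polynomial ℂ) : cmap ℓ m F = fcoe ℓ F m := rfl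

def Phi (α β k : ℝ) (ℓ : ℕ) (lam : ℂ) (w : ℕ) :
    (Fin (ℓ+1) → ℂ) →ₗ[ℂ] (Fin (ℓ+1) → Polynomial ℂ) :=
  LinearMap.pi fun i => ∑ m ∈ Finset.range (w+1),
    (Polynomial.monomial m) ∘ₗ (LinearMap.proj i) ∘ₗ (Pmm α β k ℓ lam m).mulVecLin

section Bridge
variable {α β k : ℝ} {ℓ : ℕ}

lemma mem_DW_iff (w : ℕ) (F : Fin (ℓ+1) → Polynomial ℂ) :
    F ∈ DW ℓ w ↔ ∀ i : Fin (ℓ+1), ∀ m : ℕ, w < m → (F i).coeff m = 0 := by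
  rw [DW, Submodule.mem_pi]
  constructor
  · intro h i m hm
    exact (Polynomial.degree_le_iff_coeff_zero _ _).mp
      (Polynomial.mem_degreeLE.mp (h i (Set.mem_univ i))) m (by exact_mod_cast hm)
  · intro h i _
    rw [Polynomial.mem_degreeLE, Polynomial.degree_le_iff_coeff_zero]
    intro m hm
    exact h i m (by exact_mod_cast hm)

lemma Phi_coeff (lam : ℂ) (w : ℕ) (x : Fin (ℓ+1) → ℂ) (t : ℕ) (i : Fin (ℓ+1)) :
    (Phi α β k ℓ lam w x i).coeff t
      = if t ≤ w then (Pmm α β k ℓ lam t).mulVec x i else 0 := by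
  rw [Phi]
  simp only [LinearMap.pi_apply, LinearMap.sum_apply, LinearMap.comp_apply,
    LinearMap.proj_apply, Matrix.mulVecLin_apply]
  rw [Polynomial.finset_sum_coeff]
  simp only [Polynomial.coeff_monomial]
  rw [Finset.sum_ite_eq' (Finset.range (w+1)) t (fun m => (Pmm α β k ℓ lam m).mulVec x i)]
  simp [Finset.mem_range, Nat.lt_succ_iff]

lemma fcoe_Phi (lam : ℂ) (w : ℕ) (x : Fin (ℓ+1) → ℂ)
    (hx : (Pmm α β k ℓ lam (w+1)).mulVec x = 0) (t : ℕ) :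
    fcoe ℓ (Phi α β k ℓ lam w x) t = (Pmm α β k ℓ lam t).mulVec x := by
  funext i
  rw [fcoe, Phi_coeff]
  by_cases ht : t ≤ w
  · rw [if_pos ht]
  · rw [if_neg ht, Pmm_zero_of_ge lam x (w+1) hx t (by omega)]
    rfl

lemma Phi_mem (hβ : -1 < β) (lam : ℂ) (w : ℕ) (x : Fin (ℓ+1) → ℂ)
    (hx : (Pmm α β k ℓ lam (w+1)).mulVec x = 0) :
    Phi α β k ℓ lam w x ∈ Vlam α β k ℓ lam ⊓ DW ℓ w := by
  rw [Submodule.mem_inf]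
  constructor
  · rw [mem_Vlam_iff]
    intro m
    rw [fcoe_Phi lam w x hx (m+1), fcoe_Phi lam w x hx m, Pmm_succ, ← Matrix.mulVec_mulVec,
      step_backward (α := α) (k := k) hβ lam m]
    exact neg_add_cancel _
  · rw [mem_DW_iff]
    intro i m hm
    rw [Phi_coeff, if_neg (by omega)]

lemma finrank_sol_eq (hβ : -1 < β) (lam : ℂ) (w : ℕ) :
    Module.finrank ℂ ↥(Vlam α β k ℓ lam ⊓ DW ℓ w)
      = Module.finrank ℂ ↥(LinearMap.ker (Pmm α β k ℓ lam (w+1)).mulVecLin) := by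
  classical
  -- the map F ↦ fcoe F 0
  have hmem1 : ∀ F : ↥(Vlam α β k ℓ lam ⊓ DW ℓ w),
      (cmap ℓ 0 ∘ₗ (Vlam α β k ℓ lam ⊓ DW ℓ w).subtype) F
        ∈ LinearMap.ker (Pmm α β k ℓ lam (w+1)).mulVecLin := by
    intro F
    rw [LinearMap.mem_ker, Matrix.mulVecLin_apply, LinearMap.comp_apply, cmap_apply,
      Submodule.subtype_apply]
    rw [← sol_coeffs hβ lam _ F.2.1 (w+1)]
    funext i
    exact (mem_DW_iff w _).mp F.2.2 i (w+1) (by omega)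
  set f1 := LinearMap.codRestrict _ (cmap ℓ 0 ∘ₗ (Vlam α β k ℓ lam ⊓ DW ℓ w).subtype) hmem1
    with hf1
  have hinj1 : Function.Injective f1 := by
    intro F G hFG
    have h0 : fcoe ℓ (F : Fin (ℓ+1) → Polynomial ℂ) 0 = fcoe ℓ (G : Fin (ℓ+1) → Polynomial ℂ) 0 := by
      have := congrArg Subtype.val hFG
      simpa [hf1, cmap_apply] using this
    apply Subtype.ext
    funext i
    apply Polynomial.ext
    intro m
    have hF := sol_coeffs hβ lam _ F.2.1 m
    have hG := sol_coeffs hβ lam _ G.2.1 m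
    have : fcoe ℓ (F : Fin (ℓ+1) → Polynomial ℂ) m
        = fcoe ℓ (G : Fin (ℓ+1) → Polynomial ℂ) m := by rw [hF, hG, h0]
    exact congrFun this i
  -- the map x ↦ Phi x
  have hmem2 : ∀ x : ↥(LinearMap.ker (Pmm α β k ℓ lam (w+1)).mulVecLin),
      (Phi α β k ℓ lam w ∘ₗ (LinearMap.ker (Pmm α β k ℓ lam (w+1)).mulVecLin).subtype) x
        ∈ Vlam α β k ℓ lam ⊓ DW ℓ w := by
    intro x
    have hx := x.2
    rw [LinearMap.mem_ker, Matrix.mulVecLin_apply] at hx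
    exact Phi_mem hβ lam w _ hx
  set f2 := LinearMap.codRestrict _
    (Phi α β k ℓ lam w ∘ₗ (LinearMap.ker (Pmm α β k ℓ lam (w+1)).mulVecLin).subtype) hmem2
    with hf2
  have hinj2 : Function.Injective f2 := by
    intro x y hxy
    have hx := x.2; rw [LinearMap.mem_ker, Matrix.mulVecLin_apply] at hx
    have hy := y.2; rw [LinearMap.mem_ker, Matrix.mulVecLin_apply] at hy
    have h0 : Phi α β k ℓ lam w (x : Fin (ℓ+1) → ℂ) = Phi α β k ℓ lam w (y : Fin (ℓ+1) → ℂ) := by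
      have := congrArg Subtype.val hxy
      simpa [hf2] using this
    apply Subtype.ext
    have h1 : fcoe ℓ (Phi α β k ℓ lam w (x : Fin (ℓ+1) → ℂ)) 0
        = fcoe ℓ (Phi α β k ℓ lam w (y : Fin (ℓ+1) → ℂ)) 0 := by rw [h0]
    rw [fcoe_Phi lam w _ hx 0, fcoe_Phi lam w _ hy 0, Pmm_zero, Matrix.one_mulVec,
      Matrix.one_mulVec] at h1
    exact h1
  haveI : Module.Finite ℂ ↥(Vlam α β k ℓ lam ⊓ DW ℓ w) :=
    Module.Finite.of_injective f1 hinj1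
  exact le_antisymm (LinearMap.finrank_le_finrank_of_injective hinj1)
    (LinearMap.finrank_le_finrank_of_injective hinj2)

end Bridge

/-! ### Global degree bound and final assembly -/

section Final
variable {α β k : ℝ} {ℓ : ℕ}

lemma sol_deg_bound (hβ : -1 < β) (lam0 : ℝ) (N : ℕ)
    (hN : ∀ m : ℕ, ∀ i : Fin (ℓ+1), lamEig α β k ℓ m (i:ℕ) = lam0 → m < N)
    (F : Fin (ℓ+1) → Polynomial ℂ) (hF : F ∈ Vlam α β k ℓ (lam0:ℂ)) :
    ∀ t : ℕ, N ≤ t → fcoe ℓ F t = 0 := by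
  classical
  set D := Finset.sup Finset.univ (fun i : Fin (ℓ+1) => (F i).natDegree) with hDdef
  have hD : ∀ t : ℕ, D < t → fcoe ℓ F t = 0 := by
    intro t ht
    funext i
    exact Polynomial.coeff_eq_zero_of_natDegree_lt
      (lt_of_le_of_lt (Finset.le_sup (f := fun i : Fin (ℓ+1) => (F i).natDegree) (Finset.mem_univ i)) ht)
  have key : ∀ s t : ℕ, D < t + s → N ≤ t → fcoe ℓ F t = 0 := by
    intro s
    induction s with
    | zero => intro t ht hNt; exact hD t (by omega)
    | succ s ih =>
        intro t ht hNt
        by_cases hts : D < t + s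
        · exact ih t hts hNt
        · have hnext : fcoe ℓ F (t+1) = 0 := ih (t+1) (by omega) (by omega)
          have hrec := (mem_Vlam_iff (lam0:ℂ) F).mp hF t
          rw [hnext, Matrix.mulVec_zero, zero_add] at hrec
          by_contra hne
          have hdet : (Amm α β k ℓ (lam0:ℂ) t).det = 0 :=
            Matrix.exists_mulVec_eq_zero_iff.mp ⟨fcoe ℓ F t, hne, hrec⟩
          rw [Amm_det] at hdet
          obtain ⟨i, -, hi⟩ := Finset.prod_eq_zero_iff.mp hdet
          have : lamEig α β k ℓ t (i:ℕ) = lam0 := by exact_mod_cast sub_eq_zero.mp hi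
          exact absurd (hN t i this) (by omega)
  intro t ht
  exact key (D+1) t (by omega) ht

lemma Vlam_eq_inf (hβ : -1 < β) (lam0 : ℝ) (N : ℕ)
    (hN : ∀ m : ℕ, ∀ i : Fin (ℓ+1), lamEig α β k ℓ m (i:ℕ) = lam0 → m < N) :
    Vlam α β k ℓ (lam0:ℂ) = Vlam α β k ℓ (lam0:ℂ) ⊓ DW ℓ N := by
  refine le_antisymm (fun F hF => Submodule.mem_inf.mpr ⟨hF, ?_⟩) inf_le_left
  rw [mem_DW_iff]
  intro i m hm
  exact congrFun (sol_deg_bound hβ lam0 N hN F hF m (by omega)) i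

end Final

/-- `dim {P ∈ V(λ) : deg P ≤ w}` equals the number of `w' ≤ w` with `λ = λ_{j'}(w')` for
some `j'`; in particular `dim V(λ)` equals the number of pairs `(w', j')` with
`λ = λ_{j'}(w')`. -/
theorem dim_Vlam (α β k : ℝ) (ℓ : ℕ) (hα : -1 < α) (hβ : -1 < β)
    (hk0 : 0 < k) (hk1 : k < β + 1) (hℓ : 0 < ℓ) (w : ℕ) (j : Fin (ℓ+1)) :
    Module.finrank ℂ
        ↥(Vlam α β k ℓ ((lamEig α β k ℓ w j : ℝ) : ℂ)
            ⊓ Submodule.pi Set.univ fun _ : Fin (ℓ+1) =>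
                Polynomial.degreeLE ℂ (w : WithBot ℕ))
        = Set.ncard {w' : ℕ | w' ≤ w
            ∧ ∃ j' : Fin (ℓ+1), lamEig α β k ℓ w' j' = lamEig α β k ℓ w j}
      ∧ Module.finrank ℂ ↥(Vlam α β k ℓ ((lamEig α β k ℓ w j : ℝ) : ℂ))
        = Set.ncard {p : ℕ × Fin (ℓ+1) | lamEig α β k ℓ p.1 p.2 = lamEig α β k ℓ w j} := by
  classical
  set lam0 : ℝ := lamEig α β k ℓ w j with hlam0
  constructor
  · have h1 : (Submodule.pi Set.univ fun _ : Fin (ℓ+1) =>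
        Polynomial.degreeLE ℂ (w : WithBot ℕ)) = DW ℓ w := rfl
    rw [h1, finrank_sol_eq hβ (lam0:ℂ) w, finrank_ker_Pmm hα hβ hk0 hk1 hℓ lam0 (w+1)]
    have hset : {w' : ℕ | w' ≤ w
          ∧ ∃ j' : Fin (ℓ+1), lamEig α β k ℓ w' j' = lam0}
        = ↑((Finset.range (w+1)).filter
            (fun m => ∃ i : Fin (ℓ+1), lamEig α β k ℓ m (i:ℕ) = lam0)) := by
      ext m
      simp only [Set.mem_setOf_eq, Finset.coe_filter, Finset.mem_range, Nat.lt_succ_iff]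
    rw [hset, Set.ncard_coe_finset]
  · obtain ⟨N, hN⟩ := lamEig_level_bound (α := α) (β := β) (k := k) (ℓ := ℓ) lam0
    have hN' : ∀ m : ℕ, ∀ i : Fin (ℓ+1), lamEig α β k ℓ m (i:ℕ) = lam0 → m < N :=
      fun m i h => hN m i (i_le_ell i) h
    rw [Vlam_eq_inf hβ lam0 N hN', finrank_sol_eq hβ (lam0:ℂ) N,
      finrank_ker_Pmm hα hβ hk0 hk1 hℓ lam0 (N+1)]
    have hip : Set.InjOn Prod.fst
        {p : ℕ × Fin (ℓ+1) | lamEig α β k ℓ p.1 p.2 = lam0} := by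
      rintro ⟨m, i⟩ hm ⟨m', i'⟩ hm' (h : m = m')
      subst h
      simp only [Set.mem_setOf_eq] at hm hm'
      have : (i:ℕ) = (i':ℕ) := lamEig_inj_level hα hk1 m (hm.trans hm'.symm)
      exact Prod.ext rfl (Fin.ext this)
    have himg : Prod.fst '' {p : ℕ × Fin (ℓ+1) | lamEig α β k ℓ p.1 p.2 = lam0}
        = ↑((Finset.range (N+1)).filter
            (fun m => ∃ i : Fin (ℓ+1), lamEig α β k ℓ m (i:ℕ) = lam0)) := by
      ext m
      constructor
      · rintro ⟨⟨m', i⟩, hmem, rfl⟩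
        simp only [Set.mem_setOf_eq] at hmem
        simp only [Finset.coe_filter, Set.mem_setOf_eq, Finset.mem_range]
        exact ⟨by have := hN' m' i hmem; omega, ⟨i, hmem⟩⟩
      · intro hm
        simp only [Finset.coe_filter, Set.mem_setOf_eq, Finset.mem_range] at hm
        obtain ⟨-, i, hi⟩ := hm
        exact ⟨(m, i), hi, rfl⟩
    rw [← Set.ncard_coe_finset, ← himg, Set.ncard_image_of_injOn hip]
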